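/- arXiv:2411.13911 — 2 statements merged into one kernel-verified Lean document; each statement's English description precedes it below -/
import Mathlib

section
/- Let V be a complex vector space of dimension g ≥ 1 and set N = g(g−1)/2. There exists a linear isomorphism Φ : ⋀^N(⋀²V) → (⋀^g V)^{⊗(g−1)} such that for EVERY ordered basis e₁, …, e_g of V, Φ sends the lexicographically ordered wedge (e₁∧e₂) ∧ (e₁∧e₃) ∧ ⋯ ∧ (e₁∧e_g) ∧ (e₂∧e₃) ∧ ⋯ ∧ (e_{g−1}∧e_g) to (e₁∧⋯∧e_g) ⊗ ⋯ ⊗ (e₁∧⋯∧e_g) (tensor product of g−1 copies); in particular the assignment on one basis is independent of the chosen basis. -/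
open ExteriorAlgebra
open scoped TensorProduct

/-- The wedge `v 0 ∧ v 1 ∧ ⋯ ∧ v (n-1)`, as an element of the `n`-th exterior power
`⋀[R]^n M` (a submodule of the exterior algebra). -/
noncomputable def wedgeElem (R : Type*) [CommRing R] {M : Type*} [AddCommGroup M] [Module R M]
    (n : ℕ) (v : Fin n → M) : ⋀[R]^n M :=
  ⟨ExteriorAlgebra.ιMulti R n v, ExteriorAlgebra.ιMulti_range R n ⟨v, rfl⟩⟩

open Module

section PartA
variable {K : Type*} [Field K] {M : Type*} [AddCommGroup M] [Module K M]
  {M₂ : Type*} [AddCommGroup M₂] [Module K M₂]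

@[simp] lemma wedgeElem_coe (n : ℕ) (v : Fin n → M) :
    (wedgeElem K n v : ExteriorAlgebra K M) = ιMulti K n v := rfl

/-- Lift an `n`-ary alternating map to a linear functional on the exterior algebra,
vanishing in other degrees. -/
noncomputable def liftAlt (n : ℕ) (f : M [⋀^Fin n]→ₗ[K] K) :
    ExteriorAlgebra K M →ₗ[K] K :=
  ExteriorAlgebra.liftAlternating
    (Function.update (fun i => (0 : M [⋀^Fin i]→ₗ[K] K)) n f)

@[simp] lemma liftAlt_ιMulti (n : ℕ) (f : M [⋀^Fin n]→ₗ[K] K) (v : Fin n → M) :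
    liftAlt n f (ιMulti K n v) = f v := by
  rw [liftAlt, ExteriorAlgebra.liftAlternating_apply_ιMulti, Function.update_self]

/-- An alternating map in `n` variables on a space with a basis indexed by `Fin n`
is determined by the determinant. -/
lemma alt_expand {n : ℕ} (b : Basis (Fin n) K M) {N' : Type*} [AddCommGroup N'] [Module K N']
    (f : M [⋀^Fin n]→ₗ[K] N') (v : Fin n → M) : f v = b.det v • f ⇑b := by
  have h : f = (LinearMap.toSpanSingleton K N' (f ⇑b)).compAlternatingMap b.det := by
    refine Basis.ext_alternating b fun w hw => ?_
    have hbij : Function.Bijective w := (Finite.injective_iff_bijective).1 hw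
    set σ : Equiv.Perm (Fin n) := Equiv.ofBijective w hbij with hσ
    have hwσ : (fun i => b (w i)) = (⇑b ∘ ⇑σ) := rfl
    rw [hwσ, AlternatingMap.map_perm]
    simp only [LinearMap.compAlternatingMap_apply, AlternatingMap.map_perm, Basis.det_self,
      LinearMap.toSpanSingleton_apply, smul_assoc, one_smul]
  conv_lhs => rw [h]
  simp [LinearMap.toSpanSingleton_apply]

lemma ιMulti_eq_smul {n : ℕ} (b : Basis (Fin n) K M) (v : Fin n → M) :
    ιMulti K n v = b.det v • ιMulti K n ⇑b :=
  alt_expand b (ιMulti K n) v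

/-- The coordinate of an element of the top exterior power w.r.t. a basis. -/
noncomputable def topCoord {n : ℕ} (b : Basis (Fin n) K M) : (⋀[K]^n M) →ₗ[K] K :=
  (liftAlt n b.det).comp (Submodule.subtype _)

@[simp] lemma topCoord_wedge {n : ℕ} (b : Basis (Fin n) K M) (v : Fin n → M) :
    topCoord b (wedgeElem K n v) = b.det v := by
  simp [topCoord, wedgeElem]

lemma wedge_repr_ambient {n : ℕ} (b : Basis (Fin n) K M) {y : ExteriorAlgebra K M}
    (hy : y ∈ ⋀[K]^n M) : y = liftAlt n b.det y • ιMulti K n ⇑b := by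
  rw [← ExteriorAlgebra.ιMulti_span_fixedDegree] at hy
  induction hy using Submodule.span_induction with
  | mem x hx =>
    obtain ⟨v, rfl⟩ := hx
    rw [liftAlt_ιMulti]
    exact ιMulti_eq_smul b v
  | zero => simp
  | add x y _ _ hx hy => rw [map_add, add_smul]; exact congrArg₂ (· + ·) hx hy
  | smul c x _ hx => rw [map_smul, smul_assoc]; exact congrArg (c • ·) hx

lemma wedge_repr {n : ℕ} (b : Basis (Fin n) K M) (x : ⋀[K]^n M) :
    x = topCoord b x • wedgeElem K n ⇑b := by
  apply Subtype.ext
  simpa [topCoord] using wedge_repr_ambient b x.2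

/-- The top exterior power is one-dimensional: coordinates give a linear equivalence. -/
noncomputable def topEquiv {n : ℕ} (b : Basis (Fin n) K M) : (⋀[K]^n M) ≃ₗ[K] K :=
  LinearEquiv.ofLinear (topCoord b)
    (LinearMap.toSpanSingleton K _ (wedgeElem K n ⇑b))
    (by ext; simp [LinearMap.toSpanSingleton_apply, Basis.det_self])
    (by apply LinearMap.ext; intro x; simp [LinearMap.toSpanSingleton_apply, ← wedge_repr b x])

@[simp] lemma topEquiv_wedge {n : ℕ} (b : Basis (Fin n) K M) (v : Fin n → M) :
    topEquiv b (wedgeElem K n v) = b.det v := topCoord_wedge b v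

/-- Functoriality of exterior powers. -/
noncomputable def pmap (n : ℕ) (f : M →ₗ[K] M₂) : (⋀[K]^n M) →ₗ[K] (⋀[K]^n M₂) :=
  (ExteriorAlgebra.map f).toLinearMap.restrict (p := ⋀[K]^n M) (q := ⋀[K]^n M₂) <| by
    intro x hx
    rw [← ExteriorAlgebra.ιMulti_span_fixedDegree] at hx ⊢
    induction hx using Submodule.span_induction with
    | mem y hy =>
      obtain ⟨v, rfl⟩ := hy
      simp only [AlgHom.toLinearMap_apply, ExteriorAlgebra.map_apply_ιMulti]
      exact Submodule.subset_span ⟨_, rfl⟩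
    | zero => simp
    | add x y _ _ hx hy => rw [map_add]; exact add_mem hx hy
    | smul c x _ hx => rw [map_smul]; exact Submodule.smul_mem _ c hx

@[simp] lemma pmap_coe (n : ℕ) (f : M →ₗ[K] M₂) (x : ⋀[K]^n M) :
    (pmap n f x : ExteriorAlgebra K M₂) = ExteriorAlgebra.map f x := rfl

@[simp] lemma pmap_wedge (n : ℕ) (f : M →ₗ[K] M₂) (v : Fin n → M) :
    pmap n f (wedgeElem K n v) = wedgeElem K n (f ∘ v) := by
  apply Subtype.ext
  simp

@[simp] lemma pmap_id (n : ℕ) : pmap n (LinearMap.id : M →ₗ[K] M) = LinearMap.id := by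
  ext x
  simp

lemma pmap_comp {M₃ : Type*} [AddCommGroup M₃] [Module K M₃] (n : ℕ)
    (f : M →ₗ[K] M₂) (g : M₂ →ₗ[K] M₃) :
    pmap n (g ∘ₗ f) = (pmap n g) ∘ₗ (pmap n f) := by
  ext x
  simp [← ExteriorAlgebra.map_comp_map]

end PartA

section PartB
variable {K : Type*} [Field K] {M : Type*} [AddCommGroup M] [Module K M]

open ExteriorAlgebra

lemma ιMulti_two (v : Fin 2 → M) :
    ιMulti K 2 v = ι K (v 0) * ι K (v 1) := by
  have h2 : ιMulti K 2 v = ι K (v 0) * ιMulti K 1 (Matrix.vecTail v) :=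
    ιMulti_succ_apply v
  have h1 : ιMulti K 1 (Matrix.vecTail v) = ι K (Matrix.vecTail v 0) *
      ιMulti K 0 (Matrix.vecTail (Matrix.vecTail v)) := ιMulti_succ_apply _
  rw [h2, h1, ιMulti_zero_apply, mul_one]
  rfl

variable {g N : ℕ} (e : Basis (Fin g) K M) (p : Fin N → Fin g × Fin g)

/-- The 2×2 minor of coordinates, as an alternating bilinear form. -/
noncomputable def minorAlt (i j : Fin g) : M [⋀^Fin 2]→ₗ[K] K :=
  (Matrix.detRowAlternating (R := K) (n := Fin 2)).compLinearMap
    (LinearMap.pi ![e.coord i, e.coord j])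

lemma minorAlt_apply (i j : Fin g) (x y : M) :
    minorAlt e i j ![x, y] =
      e.coord i x * e.coord j y - e.coord j x * e.coord i y := by
  simp only [minorAlt, AlternatingMap.compLinearMap_apply]
  rw [show (fun k => (LinearMap.pi ![e.coord i, e.coord j]) (![x, y] k)) =
      ![fun l => ![e.coord i, e.coord j] l x, fun l => ![e.coord i, e.coord j] l y] from by
    funext k; fin_cases k <;> rfl]
  rw [show (Matrix.detRowAlternating (R := K) (n := Fin 2))
      ![fun l => ![e.coord i, e.coord j] l x, fun l => ![e.coord i, e.coord j] l y]
    = Matrix.det (Matrix.of ![fun l => ![e.coord i, e.coord j] l x,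
        fun l => ![e.coord i, e.coord j] l y]) from rfl]
  rw [Matrix.det_fin_two]
  simp [Matrix.of_apply]

lemma minorAlt_basis (i j a b : Fin g) (hij : i < j) (hab : a < b) :
    minorAlt e i j ![e a, e b] = if i = a ∧ j = b then 1 else 0 := by
  rw [minorAlt_apply]
  have hc : ∀ s t : Fin g, e.coord s (e t) = if s = t then 1 else 0 := by
    intro s t
    rw [Basis.coord_apply, Basis.repr_self, Finsupp.single_apply]
    simp [eq_comm]
  rw [hc, hc, hc, hc]
  have h2 : (if j = a then (1:K) else 0) * (if i = b then 1 else 0) = 0 := by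
    by_cases hja : j = a
    · by_cases hib : i = b
      · rw [hja, hib] at hij
        exact absurd hij (not_lt.2 hab.le)
      · simp [hib]
    · simp [hja]
  rw [h2, sub_zero]
  by_cases h1 : i = a <;> by_cases h2 : j = b <;> simp [h1, h2]


/-- The pair-wedge family in `⋀² M`. -/
noncomputable def pairFam : Fin N → (⋀[K]^2 M) :=
  fun k => wedgeElem K 2 ![e (p k).1, e (p k).2]

lemma pairFam_coe (k : Fin N) :
    (pairFam e p k : ExteriorAlgebra K M) = ι K (e (p k).1) * ι K (e (p k).2) := by
  rw [pairFam, wedgeElem_coe, ιMulti_two]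
  rfl

lemma p_inj (hmono : StrictMono fun k : Fin N => toLex (p k)) :
    Function.Injective p := by
  intro k l h
  exact hmono.injective (by rw [h])

lemma p_lt (hrange : ∀ q : Fin g × Fin g, q ∈ Set.range p ↔ q.1 < q.2) (k : Fin N) :
    (p k).1 < (p k).2 := (hrange (p k)).1 ⟨k, rfl⟩

section hyps
variable (hmono : StrictMono fun k : Fin N => toLex (p k))
  (hrange : ∀ q : Fin g × Fin g, q ∈ Set.range p ↔ q.1 < q.2)
include hrange

lemma pairFam_span :
    (⋀[K]^2 M : Submodule K (ExteriorAlgebra K M)) ≤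
      Submodule.span K (Set.range fun k => (pairFam e p k : ExteriorAlgebra K M)) := by
  refine le_trans (le_of_eq (ExteriorAlgebra.ιMulti_span_fixedDegree K 2).symm) ?_
  rw [Submodule.span_le]
  rintro x ⟨v, rfl⟩
  have key : ∀ i j : Fin g, ι K (e i) * ι K (e j) ∈
      Submodule.span K (Set.range fun k => (pairFam e p k : ExteriorAlgebra K M)) := by
    intro i j
    rcases lt_trichotomy i j with h | h | h
    · obtain ⟨k, hk⟩ := (hrange (i, j)).2 h
      apply Submodule.subset_span
      exact ⟨k, by show (pairFam e p k : ExteriorAlgebra K M) = _; rw [pairFam_coe, hk]⟩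
    · rw [h, ExteriorAlgebra.ι_sq_zero]
      exact Submodule.zero_mem _
    · obtain ⟨k, hk⟩ := (hrange (j, i)).2 h
      have hneg : ι K (e i) * ι K (e j) = - (ι K (e j) * ι K (e i)) :=
        eq_neg_of_add_eq_zero_left (ExteriorAlgebra.ι_add_mul_swap (R := K) (e i) (e j))
      rw [hneg]
      apply Submodule.neg_mem
      apply Submodule.subset_span
      exact ⟨k, by show (pairFam e p k : ExteriorAlgebra K M) = _; rw [pairFam_coe, hk]⟩
  rw [ιMulti_two]
  have h0 : ι K (v 0) = ∑ i, e.repr (v 0) i • ι K (e i) := by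
    conv_lhs => rw [← Basis.sum_repr e (v 0)]
    rw [map_sum]
    simp
  have h1 : ι K (v 1) = ∑ j, e.repr (v 1) j • ι K (e j) := by
    conv_lhs => rw [← Basis.sum_repr e (v 1)]
    rw [map_sum]
    simp
  rw [h0, h1, Finset.sum_mul_sum]
  apply Submodule.sum_mem
  intro i _
  apply Submodule.sum_mem
  intro j _
  rw [smul_mul_smul_comm]
  exact Submodule.smul_mem _ _ (key i j)

include hmono in
lemma pairFam_linearIndependent : LinearIndependent K (pairFam e p) := by
  rw [Fintype.linearIndependent_iff]
  intro a ha l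
  have ha' : (∑ k, a k • (pairFam e p k : ExteriorAlgebra K M)) = 0 := by
    have := congrArg (Submodule.subtype _) ha
    simpa using this
  have := congrArg (liftAlt 2 (minorAlt e (p l).1 (p l).2)) ha'
  rw [map_sum, map_zero] at this
  have hterm : ∀ k, liftAlt 2 (minorAlt e (p l).1 (p l).2)
      (a k • (pairFam e p k : ExteriorAlgebra K M)) = if k = l then a k else 0 := by
    intro k
    rw [map_smul]
    rw [show (pairFam e p k : ExteriorAlgebra K M) = ιMulti K 2 ![e (p k).1, e (p k).2] from rfl]
    rw [liftAlt_ιMulti]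
    rw [minorAlt_basis e _ _ _ _ (p_lt p hrange l) (p_lt p hrange k)]
    by_cases h : k = l
    · subst h; simp
    · have hkl : ¬((p l).1 = (p k).1 ∧ (p l).2 = (p k).2) := by
        rintro ⟨h1, h2⟩
        exact h (p_inj p hmono (Prod.ext h1.symm h2.symm))
      simp [h, hkl]
  rw [Finset.sum_congr rfl (fun k _ => hterm k)] at this
  simpa using this

/-- The basis of `⋀² M` given by pair wedges of a basis. -/
noncomputable def pairBasis : Basis (Fin N) K (⋀[K]^2 M) :=
  Basis.mk (pairFam_linearIndependent e p hmono hrange) (by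
    intro x _
    have hx : (x : ExteriorAlgebra K M) ∈
        Submodule.span K (Set.range fun k => (pairFam e p k : ExteriorAlgebra K M)) :=
      pairFam_span e p hrange x.2
    have himg : Submodule.span K (Set.range fun k => (pairFam e p k : ExteriorAlgebra K M))
        = Submodule.map (Submodule.subtype _) (Submodule.span K (Set.range (pairFam e p))) := by
      rw [Submodule.map_span]
      congr 1
      rw [← Set.range_comp]
      rfl
    rw [himg] at hx
    obtain ⟨y, hy, hyx⟩ := hx
    have : y = x := Subtype.ext hyx
    exact this ▸ hy)

@[simp] lemma pairBasis_coe : ⇑(pairBasis e p hmono hrange) = pairFam e p :=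
  Basis.coe_mk _ _

end hyps
end PartB

section PartC
variable {K : Type*} [Field K] {M : Type*} [AddCommGroup M] [Module K M]

open ExteriorAlgebra

/-- `det (1 + B) = 1` for a nilpotent matrix `B`. -/
lemma det_one_add_of_nilpotent {n : Type*} [DecidableEq n] [Fintype n]
    (B : Matrix n n K) (hB : IsNilpotent B) : Matrix.det (1 + B) = 1 := by
  have hu := Matrix.isUnit_charpolyRev_of_isNilpotent hB.neg
  obtain ⟨r, hru, hrC⟩ := Polynomial.isUnit_iff.1 hu
  have h0 : Polynomial.eval 0 (Matrix.charpolyRev (-B)) = 1 := Matrix.eval_charpolyRev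
  have key : Polynomial.eval 1 (Matrix.charpolyRev (-B)) = Matrix.det (1 + B) := by
    rw [Matrix.charpolyRev]
    rw [show (Polynomial.eval (1:K) : Polynomial K → K) = ⇑(Polynomial.evalRingHom (1:K))
      from rfl]
    rw [RingHom.map_det]
    congr 1
    ext k l
    by_cases h : k = l <;>
      simp [h, Matrix.one_apply, Matrix.map_apply, Matrix.sub_apply, Matrix.smul_apply,
        Matrix.neg_apply]
  rw [← hrC, Polynomial.eval_C] at h0
  rw [← key, ← hrC, Polynomial.eval_C, h0]

lemma wedge2_zero_left (y : M) : wedgeElem K 2 ![(0 : M), y] = 0 := by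
  apply Subtype.ext
  rw [wedgeElem_coe, ιMulti_two]
  simp

lemma wedge2_zero_right (x : M) : wedgeElem K 2 ![x, (0 : M)] = 0 := by
  apply Subtype.ext
  rw [wedgeElem_coe, ιMulti_two]
  simp

lemma wedge2_smul (a b : K) (x y : M) :
    wedgeElem K 2 ![a • x, b • y] = (a * b) • wedgeElem K 2 ![x, y] := by
  apply Subtype.ext
  rw [wedgeElem_coe, ιMulti_two]
  show (ι K (a • x)) * (ι K (b • y)) = (a * b) • (wedgeElem K 2 ![x, y] : ExteriorAlgebra K M)
  rw [wedgeElem_coe, ιMulti_two, map_smul, map_smul, smul_mul_smul_comm]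
  rfl

variable {g N : ℕ} (e : Basis (Fin g) K M) (p : Fin N → Fin g × Fin g)
  (hmono : StrictMono fun k : Fin N => toLex (p k))
  (hrange : ∀ q : Fin g × Fin g, q ∈ Set.range p ↔ q.1 < q.2)

include hmono hrange

lemma det_pmap_transvection (i j : Fin g) (hij : i ≠ j) (c : K) :
    LinearMap.det (pmap 2 (Matrix.toLin e e (Matrix.transvection i j c))) = 1 := by
  classical
  set cB := pairBasis e p hmono hrange with hcB
  set E : M →ₗ[K] M := (c • e.coord j).smulRight (e i) with hEdef
  have hEapp : ∀ x, E x = (c * e.repr x j) • e i := by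
    intro x
    simp [hEdef, LinearMap.smulRight_apply, Basis.coord_apply, smul_smul]
  have hEbasis : ∀ l : Fin g, E (e l) = if l = j then c • e i else 0 := by
    intro l
    rw [hEapp]
    rcases eq_or_ne l j with h | h <;> simp [h, Basis.repr_self, Finsupp.single_apply]
  have hEE : ∀ x, E (E x) = 0 := by
    intro x
    rw [hEapp x, map_smul, hEbasis i, if_neg hij, smul_zero]
  have hwedgeEE : ∀ x y : M, ι K (E x) * ι K (E y) = 0 := by
    intro x y
    rw [hEapp x, hEapp y, map_smul, map_smul, smul_mul_smul_comm,
      ExteriorAlgebra.ι_sq_zero, smul_zero]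
  have hT : Matrix.toLin e e (Matrix.transvection i j c) = LinearMap.id + E := by
    rw [Matrix.transvection, map_add, Matrix.toLin_one]
    congr 1
    apply e.ext
    intro l
    rw [Matrix.toLin_self, hEbasis]
    rcases eq_or_ne l j with h | h
    · subst h
      rw [if_pos rfl]
      rw [Finset.sum_eq_single i]
      · simp [Matrix.single]
      · intro k _ hk
        simp [Matrix.single, Ne.symm hk]
      · intro h; exact absurd (Finset.mem_univ i) h
    · rw [if_neg h]
      apply Finset.sum_eq_zero
      intro k _
      have : Matrix.single i j c k l = 0 := by
        simp [Matrix.single, Ne.symm h]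
      rw [this, zero_smul]
  set D2 : (⋀[K]^2 M) →ₗ[K] (⋀[K]^2 M) :=
    pmap 2 (LinearMap.id + E) - LinearMap.id with hD2def
  have hD2w : ∀ x y : M, D2 (wedgeElem K 2 ![x, y]) =
      wedgeElem K 2 ![E x, y] + wedgeElem K 2 ![x, E y] := by
    intro x y
    apply Subtype.ext
    rw [hD2def]
    rw [LinearMap.sub_apply, LinearMap.id_apply, Submodule.coe_sub]
    rw [pmap_coe, wedgeElem_coe, ExteriorAlgebra.map_apply_ιMulti]
    have hcomp : (⇑((LinearMap.id : M →ₗ[K] M) + E) ∘ ![x, y]) = ![x + E x, y + E y] := by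
      funext k
      fin_cases k <;> simp
    rw [hcomp]
    rw [show ((wedgeElem K 2 ![E x, y] + wedgeElem K 2 ![x, E y] : (⋀[K]^2 M)) :
        ExteriorAlgebra K M) = ιMulti K 2 ![E x, y] + ιMulti K 2 ![x, E y] from rfl]
    rw [ιMulti_two, ιMulti_two, ιMulti_two, ιMulti_two]
    show (ι K (x + E x)) * (ι K (y + E y)) - ι K x * ι K y =
      ι K (E x) * ι K y + ι K x * ι K (E y)
    rw [map_add, map_add, add_mul, mul_add, mul_add, hwedgeEE x y]
    abel
  have hD2D2 : D2 ∘ₗ D2 = 0 := by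
    apply cB.ext
    intro k
    rw [LinearMap.comp_apply, LinearMap.zero_apply]
    have hk : cB k = wedgeElem K 2 ![e (p k).1, e (p k).2] := by
      rw [hcB, pairBasis_coe]
      rfl
    rw [hk, hD2w, map_add, hD2w, hD2w, hEE, hEE]
    rw [wedge2_zero_left, wedge2_zero_right]
    have hEwedge0 : ∀ x y : M, wedgeElem K 2 ![E x, E y] = 0 := by
      intro x y
      apply Subtype.ext
      rw [wedgeElem_coe, ιMulti_two]
      show ι K (E x) * ι K (E y) = 0
      exact hwedgeEE x y
    rw [hEwedge0]
    simp
  have hBB : LinearMap.toMatrix cB cB D2 * LinearMap.toMatrix cB cB D2 = 0 := by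
    rw [← LinearMap.toMatrix_comp cB cB cB, hD2D2, LinearEquiv.map_zero]
  rw [hT, ← LinearMap.det_toMatrix cB]
  have : pmap 2 (LinearMap.id + E) = LinearMap.id + D2 := by
    rw [hD2def]; abel
  rw [this, LinearEquiv.map_add, LinearMap.toMatrix_id]
  exact det_one_add_of_nilpotent _ ⟨2, by rw [sq, hBB]⟩

lemma det_pmap_diagonal (d : Fin g → K) :
    LinearMap.det (pmap 2 (Matrix.toLin e e (Matrix.diagonal d))) = (∏ i, d i) ^ (g - 1) := by
  classical
  set cB := pairBasis e p hmono hrange with hcB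
  have hdiagact : ∀ l : Fin g, Matrix.toLin e e (Matrix.diagonal d) (e l) = d l • e l := by
    intro l
    rw [Matrix.toLin_self]
    rw [Finset.sum_eq_single l]
    · rw [Matrix.diagonal_apply_eq]
    · intro k _ hk
      rw [Matrix.diagonal_apply_ne _ hk, zero_smul]
    · intro h; exact absurd (Finset.mem_univ l) h
  have hact : ∀ k : Fin N, pmap 2 (Matrix.toLin e e (Matrix.diagonal d)) (cB k)
      = (d (p k).1 * d (p k).2) • cB k := by
    intro k
    have hk : cB k = wedgeElem K 2 ![e (p k).1, e (p k).2] := by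
      rw [hcB, pairBasis_coe]; rfl
    rw [hk, pmap_wedge]
    have hcomp : (⇑(Matrix.toLin e e (Matrix.diagonal d)) ∘ ![e (p k).1, e (p k).2])
        = ![d (p k).1 • e (p k).1, d (p k).2 • e (p k).2] := by
      funext m
      fin_cases m <;> simp [hdiagact]
    rw [hcomp, wedge2_smul]
  have hmat : LinearMap.toMatrix cB cB (pmap 2 (Matrix.toLin e e (Matrix.diagonal d)))
      = Matrix.diagonal (fun k => d (p k).1 * d (p k).2) := by
    ext k l
    rw [LinearMap.toMatrix_apply, hact, map_smul, Basis.repr_self]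
    rcases eq_or_ne k l with h | h
    · subst h; simp
    · simp [Finsupp.single_apply, Ne.symm h, Matrix.diagonal_apply_ne _ h]
  rw [← LinearMap.det_toMatrix cB, hmat, Matrix.det_diagonal]
  -- combinatorics
  have hreindex : ∏ k : Fin N, (d (p k).1 * d (p k).2)
      = ∏ q ∈ Finset.univ.filter (fun q : Fin g × Fin g => q.1 < q.2), (d q.1 * d q.2) := by
    apply Finset.prod_bij (fun k _ => p k)
    · intro k _
      exact Finset.mem_filter.2 ⟨Finset.mem_univ _, p_lt p hrange k⟩
    · intro k _ l _ h
      exact p_inj p hmono h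
    · intro q hq
      obtain ⟨k, hk⟩ := (hrange q).2 (Finset.mem_filter.1 hq).2
      exact ⟨k, Finset.mem_univ _, hk⟩
    · intro k _
      rfl
  rw [hreindex, Finset.prod_mul_distrib]
  have h1 : ∏ q ∈ Finset.univ.filter (fun q : Fin g × Fin g => q.1 < q.2), d q.1
      = ∏ i : Fin g, d i ^ (g - 1 - (i : ℕ)) := by
    rw [Finset.prod_filter, ← Finset.univ_product_univ, Finset.prod_product]
    apply Finset.prod_congr rfl
    intro i _
    rw [Finset.prod_ite, Finset.prod_const_one, mul_one,
      Finset.prod_congr rfl (fun x _ => show d (i, x).1 = d i from rfl), Finset.prod_const]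
    congr 1
    rw [show Finset.filter (fun x : Fin g => (i, x).1 < (i, x).2) Finset.univ
        = Finset.Ioi i from by ext x; simp [Finset.mem_Ioi]]
    exact Fin.card_Ioi i
  have h2 : ∏ q ∈ Finset.univ.filter (fun q : Fin g × Fin g => q.1 < q.2), d q.2
      = ∏ j : Fin g, d j ^ (j : ℕ) := by
    rw [Finset.prod_filter, ← Finset.univ_product_univ, Finset.prod_product_right]
    apply Finset.prod_congr rfl
    intro j _
    rw [Finset.prod_ite, Finset.prod_const_one, mul_one,
      Finset.prod_congr rfl (fun x _ => show d (x, j).2 = d j from rfl), Finset.prod_const]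
    congr 1
    rw [show Finset.filter (fun x : Fin g => (x, j).1 < (x, j).2) Finset.univ
        = Finset.Iio j from by ext x; simp [Finset.mem_Iio]]
    exact Fin.card_Iio j
  rw [h1, h2, ← Finset.prod_mul_distrib]
  rw [← Finset.prod_pow]
  apply Finset.prod_congr rfl
  intro i _
  rw [← pow_add]
  congr 1
  have : (i : ℕ) ≤ g - 1 := Nat.le_sub_one_of_lt i.isLt
  omega

lemma det_pmap_matrix (A : Matrix (Fin g) (Fin g) K) :
    LinearMap.det (pmap 2 (Matrix.toLin e e A)) = (Matrix.det A) ^ (g - 1) := by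
  classical
  have hμmul : ∀ A B : Matrix (Fin g) (Fin g) K,
      LinearMap.det (pmap 2 (Matrix.toLin e e (A * B)))
      = LinearMap.det (pmap 2 (Matrix.toLin e e A))
        * LinearMap.det (pmap 2 (Matrix.toLin e e B)) := by
    intro A B
    rw [Matrix.toLin_mul e e e, pmap_comp, LinearMap.det_comp]
  have hμtrans : ∀ t : Matrix.TransvectionStruct (Fin g) K,
      LinearMap.det (pmap 2 (Matrix.toLin e e t.toMatrix)) = 1 := by
    rintro ⟨i, j, hij, c⟩
    rw [Matrix.TransvectionStruct.toMatrix_mk]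
    exact det_pmap_transvection e p hmono hrange i j hij c
  have hμlist : ∀ L : List (Matrix.TransvectionStruct (Fin g) K),
      LinearMap.det (pmap 2 (Matrix.toLin e e
        (L.map Matrix.TransvectionStruct.toMatrix).prod)) = 1 := by
    intro L
    induction L with
    | nil =>
      rw [List.map_nil, List.prod_nil, Matrix.toLin_one, pmap_id, LinearMap.det_id]
    | cons t L ih =>
      rw [List.map_cons, List.prod_cons, hμmul, hμtrans, one_mul, ih]
  obtain ⟨L, L', D, hD⟩ := Matrix.Pivot.exists_list_transvec_mul_diagonal_mul_list_transvec A
  have hdetlist : ∀ L : List (Matrix.TransvectionStruct (Fin g) K),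
      Matrix.det (L.map Matrix.TransvectionStruct.toMatrix).prod = 1 := by
    intro L
    induction L with
    | nil => simp
    | cons t L ih =>
      rw [List.map_cons, List.prod_cons, Matrix.det_mul, ih, mul_one,
        Matrix.TransvectionStruct.det]
  rw [hD, hμmul, hμmul, hμlist, hμlist, one_mul, mul_one]
  rw [Matrix.det_mul, Matrix.det_mul, hdetlist, hdetlist, one_mul, mul_one]
  rw [Matrix.det_diagonal]
  exact det_pmap_diagonal e p hmono hrange D

include e in
/-- The crux: the determinant of the induced map on `⋀²` is `det f ^ (g-1)`. -/
lemma det_pmap_two (f : M →ₗ[K] M) :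
    LinearMap.det (pmap 2 f) = (LinearMap.det f) ^ (g - 1) := by
  have hf : f = Matrix.toLin e e (LinearMap.toMatrix e e f) := (Matrix.toLin_toMatrix e e f).symm
  conv_lhs => rw [hf]
  rw [det_pmap_matrix e p hmono hrange, LinearMap.det_toMatrix]

end PartC

section PartD

lemma card_ltPairs (g : ℕ) : ((Finset.univ : Finset (Fin g × Fin g)).filter
    (fun q => q.1 < q.2)).card = g * (g - 1) / 2 := by
  classical
  rw [Finset.card_filter, ← Finset.univ_product_univ, Finset.sum_product]
  have hinner : ∀ i : Fin g, (∑ j : Fin g, if (i, j).1 < (i, j).2 then 1 else 0)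
      = g - 1 - (i : ℕ) := by
    intro i
    rw [Finset.sum_boole, Nat.cast_id]
    rw [show Finset.filter (fun j : Fin g => (i, j).1 < (i, j).2) Finset.univ
        = Finset.Ioi i from by ext x; simp [Finset.mem_Ioi]]
    exact Fin.card_Ioi i
  rw [Finset.sum_congr rfl (fun i _ => hinner i)]
  rw [Fin.sum_univ_eq_sum_range (fun i => g - 1 - i) g]
  rw [show (∑ i ∈ Finset.range g, (g - 1 - i)) = ∑ i ∈ Finset.range g, i from
    Finset.sum_range_reflect (fun i => i) g]
  exact Finset.sum_range_id g

end PartD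


/-- Let `V` be a complex vector space of dimension `g ≥ 1` and
`N = g(g-1)/2`.  There is a linear isomorphism
`Φ : ⋀^N (⋀² V) ≃ (⋀^g V)^{⊗(g-1)}` such that for every ordered basis `e₁, …, e_g` of `V`,
`Φ` sends the lexicographically ordered wedge
`(e₁∧e₂) ∧ (e₁∧e₃) ∧ ⋯ ∧ (e₁∧e_g) ∧ (e₂∧e₃) ∧ ⋯ ∧ (e_{g-1}∧e_g)` to
`(e₁∧⋯∧e_g) ⊗ ⋯ ⊗ (e₁∧⋯∧e_g)` (tensor product of `g-1` copies).  (The lexicographic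
enumeration is encoded by quantifying over all `p : Fin N → Fin g × Fin g` that are strictly
monotone for the lexicographic order and whose range is exactly the set of pairs `(i,j)`
with `i < j`.) -/
theorem exists_linearEquiv_exteriorPower_of_exteriorPower_two
    (V : Type*) [AddCommGroup V] [Module ℂ V] [FiniteDimensional ℂ V]
    (g N : ℕ) (hg : 1 ≤ g) (hdim : Module.finrank ℂ V = g) (hN : N = g * (g - 1) / 2) :
    ∃ Φ : (⋀[ℂ]^N (⋀[ℂ]^2 V)) ≃ₗ[ℂ] (⨂[ℂ] _i : Fin (g - 1), (⋀[ℂ]^g V)),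
      ∀ (e : Module.Basis (Fin g) ℂ V) (p : Fin N → Fin g × Fin g),
        StrictMono (fun k : Fin N => toLex (p k)) →
        (∀ q : Fin g × Fin g, q ∈ Set.range p ↔ q.1 < q.2) →
        Φ (wedgeElem ℂ N (fun k => wedgeElem ℂ 2 ![e (p k).1, e (p k).2]))
          = PiTensorProduct.tprod ℂ (fun _ : Fin (g - 1) => wedgeElem ℂ g (fun i => e i)) := by
  classical
  -- the canonical lexicographic enumeration of the pairs (i, j) with i < j
  set sL : Finset (Lex (Fin g × Fin g)) :=
    Finset.univ.filter (fun q => (ofLex q).1 < (ofLex q).2) with hsL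
  have hsLcard : sL.card = N := by
    have himg : sL = (Finset.univ.filter (fun q : Fin g × Fin g => q.1 < q.2)).map
        (toLex : (Fin g × Fin g) ≃ Lex (Fin g × Fin g)).toEmbedding := by
      ext a
      simp only [hsL, Finset.mem_filter, Finset.mem_univ, true_and, Finset.mem_map,
        Equiv.coe_toEmbedding]
      constructor
      · intro h
        exact ⟨ofLex a, h, rfl⟩
      · rintro ⟨b, hb, rfl⟩
        exact hb
    rw [himg, Finset.card_map, card_ltPairs, hN]
  set p₀ : Fin N → Fin g × Fin g :=
    fun k => ofLex ((sL.orderIsoOfFin hsLcard k : Lex (Fin g × Fin g))) with hp₀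
  have hmono₀ : StrictMono fun k : Fin N => toLex (p₀ k) := by
    intro a b hab
    show toLex (p₀ a) < toLex (p₀ b)
    have h := (sL.orderIsoOfFin hsLcard).strictMono hab
    exact h
  have hrange₀ : ∀ q : Fin g × Fin g, q ∈ Set.range p₀ ↔ q.1 < q.2 := by
    intro q
    constructor
    · rintro ⟨k, rfl⟩
      have hmem := (sL.orderIsoOfFin hsLcard k).2
      simp only [hsL, Finset.mem_filter] at hmem
      exact hmem.2
    · intro hq
      have hmem : toLex q ∈ sL := by
        simp only [hsL, Finset.mem_filter]
        exact ⟨Finset.mem_univ _, hq⟩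
      refine ⟨(sL.orderIsoOfFin hsLcard).symm ⟨toLex q, hmem⟩, ?_⟩
      show ofLex ((sL.orderIsoOfFin hsLcard ((sL.orderIsoOfFin hsLcard).symm ⟨toLex q, hmem⟩) :
        Lex (Fin g × Fin g))) = q
      rw [OrderIso.apply_symm_apply]
      rfl
  have huniq : ∀ p' : Fin N → Fin g × Fin g,
      (StrictMono fun k => toLex (p' k)) →
      (∀ q, q ∈ Set.range p' ↔ q.1 < q.2) → p' = p₀ := by
    intro p' hm hr
    have hr' : ∀ (p'' : Fin N → Fin g × Fin g),
        (∀ q, q ∈ Set.range p'' ↔ q.1 < q.2) →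
        Set.range (fun k => toLex (p'' k)) =
          {x : Lex (Fin g × Fin g) | (ofLex x).1 < (ofLex x).2} := by
      intro p'' h
      ext x
      constructor
      · rintro ⟨k, rfl⟩
        exact (h (p'' k)).1 ⟨k, rfl⟩
      · intro hx
        obtain ⟨k, hk⟩ := (h (ofLex x)).2 hx
        exact ⟨k, by show toLex (p'' k) = x; rw [hk]; rfl⟩
    haveI : WellFoundedLT (Fin N) := Finite.to_wellFoundedLT
    have hfun : (fun k => toLex (p' k)) = (fun k => toLex (p₀ k)) := by
      apply (StrictMono.range_inj hm hmono₀).1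
      rw [hr' p' hr, hr' p₀ hrange₀]
    funext k
    have := congrFun hfun k
    exact congrArg ofLex this
  -- fixed basis of V
  set e₀ : Basis (Fin g) ℂ V := (Module.finBasis ℂ V).reindex (finCongr hdim) with he₀
  set cB : Basis (Fin N) ℂ (⋀[ℂ]^2 V) := pairBasis e₀ p₀ hmono₀ hrange₀ with hcB
  set ET : (⨂[ℂ] _i : Fin (g - 1), (⋀[ℂ]^g V)) ≃ₗ[ℂ] ℂ :=
    (PiTensorProduct.congr fun _ : Fin (g - 1) => topEquiv e₀).trans
      (PiTensorProduct.constantBaseRingEquiv (Fin (g - 1)) ℂ).toLinearEquiv with hET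
  refine ⟨(topEquiv cB).trans ET.symm, ?_⟩
  intro e p hm hr
  rw [huniq p hm hr]
  rw [LinearEquiv.trans_apply, LinearEquiv.symm_apply_eq]
  -- the change-of-basis endomorphism
  set f : V →ₗ[ℂ] V := (e₀.constr ℂ : (Fin g → V) ≃ₗ[ℂ] (V →ₗ[ℂ] V)) ⇑e with hf
  have hfb : ∀ i, f (e₀ i) = e i := fun i => e₀.constr_basis ℂ ⇑e i
  have hecomp : ⇑e = ⇑f ∘ ⇑e₀ := by
    funext i
    exact (hfb i).symm
  -- right-hand side
  have hRHS : ET (PiTensorProduct.tprod ℂ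
      (fun _ : Fin (g - 1) => wedgeElem ℂ g (fun i => e i))) = (LinearMap.det f) ^ (g - 1) := by
    rw [hET, LinearEquiv.trans_apply, PiTensorProduct.congr_tprod]
    rw [AlgEquiv.toLinearEquiv_apply, PiTensorProduct.constantBaseRingEquiv_tprod]
    rw [Finset.prod_const, Finset.card_univ, Fintype.card_fin]
    congr 1
    rw [topEquiv_wedge]
    rw [show (fun i => e i) = ⇑e from rfl, hecomp, Basis.det_comp, Basis.det_self, mul_one]
  rw [hRHS]
  -- left-hand side
  have hfam : (fun k => wedgeElem ℂ 2 ![e (p₀ k).1, e (p₀ k).2]) = ⇑(pmap 2 f) ∘ ⇑cB := by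
    funext k
    rw [Function.comp_apply, hcB, pairBasis_coe]
    rw [show pairFam e₀ p₀ k = wedgeElem ℂ 2 ![e₀ (p₀ k).1, e₀ (p₀ k).2] from rfl]
    rw [pmap_wedge]
    congr 1
    funext m
    fin_cases m <;> simp [hfb]
  rw [hfam, topEquiv_wedge, Basis.det_comp, Basis.det_self, mul_one]
  exact det_pmap_two e₀ p₀ hmono₀ hrange₀ f
end

section
/- Let V, V', W, W' be finite-dimensional complex inner product spaces, with dim V = dim V' = dim W = dim W' = m ≥ 1. Let φ : V → V' and ψ : W → W' be ℂ-linear isomorphisms, and let c : V → W and c' : V' → W' be conjugate-linear isomorphisms satisfying ⟨c(x), c(y)⟩_W = ⟨y, x⟩_V for all x, y ∈ V and ⟨c'(x'), c'(y')⟩_{W'} = ⟨y', x'⟩_{V'} for all x', y' ∈ V'. Assume the diagram commutes: ψ ∘ c = c' ∘ φ. Then for every basis (α₁, …, α_m) of V and every basis (β₁, …, β_m) of W, det(⟨φ(α_i), φ(α_j)⟩) · det(⟨β_i, β_j⟩) = det(⟨ψ(β_i), ψ(β_j)⟩) · det(⟨α_i, α_j⟩). (This is the linear-algebra core of the paper's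 lemma that the metric discrepancy functions satisfy c̃₁(φ) = c̃₁(ψ) for the Hodge-bundle isomorphisms φ and ψ.) -/
open Matrix
open scoped ComplexInnerProductSpace

/-- Gram matrix of linear combinations. -/
lemma gram_of_lincomb {X : Type*} [NormedAddCommGroup X] [InnerProductSpace ℂ X]
    {m : ℕ} (M : Matrix (Fin m) (Fin m) ℂ) (v : Fin m → X) :
    (Matrix.of fun i j : Fin m => ⟪∑ k, M i k • v k, ∑ l, M j l • v l⟫)
      = M.map star * (Matrix.of fun i j : Fin m => ⟪v i, v j⟫) * Mᵀ := by
  ext i j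
  simp only [Matrix.mul_apply, Matrix.of_apply, Matrix.map_apply, Matrix.transpose_apply,
    sum_inner, inner_sum, inner_smul_left, inner_smul_right]
  simp only [Finset.mul_sum, Finset.sum_mul, starRingEnd_apply]
  exact Finset.sum_congr rfl fun k _ => Finset.sum_congr rfl fun l _ => by ring

/-- Let `V, V', W, W'` be finite-dimensional complex inner product spaces,
all of dimension `m ≥ 1`.  Let `φ : V → V'` and `ψ : W → W'` be ℂ-linear isomorphisms and
let `c : V → W`, `c' : V' → W'` be conjugate-linear isomorphisms satisfying
`⟪c x, c y⟫ = ⟪y, x⟫` and `⟪c' x', c' y'⟫ = ⟪y', x'⟫`.  If the diagram commutes,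
`ψ ∘ c = c' ∘ φ`, then for every basis `(α₁, …, α_m)` of `V` and every basis
`(β₁, …, β_m)` of `W`,
`det(⟪φ αᵢ, φ αⱼ⟫) · det(⟪βᵢ, βⱼ⟫) = det(⟪ψ βᵢ, ψ βⱼ⟫) · det(⟪αᵢ, αⱼ⟫)`. -/
theorem gram_det_mul_eq_of_conjugateLinear_commute
    {V V' W W' : Type*}
    [NormedAddCommGroup V] [InnerProductSpace ℂ V] [FiniteDimensional ℂ V]
    [NormedAddCommGroup V'] [InnerProductSpace ℂ V'] [FiniteDimensional ℂ V']
    [NormedAddCommGroup W] [InnerProductSpace ℂ W] [FiniteDimensional ℂ W]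
    [NormedAddCommGroup W'] [InnerProductSpace ℂ W'] [FiniteDimensional ℂ W']
    (m : ℕ) (hm : 1 ≤ m)
    (hV : Module.finrank ℂ V = m) (hV' : Module.finrank ℂ V' = m)
    (hW : Module.finrank ℂ W = m) (hW' : Module.finrank ℂ W' = m)
    (φ : V ≃ₗ[ℂ] V') (ψ : W ≃ₗ[ℂ] W')
    (c : V ≃ₗ⋆[ℂ] W) (c' : V' ≃ₗ⋆[ℂ] W')
    (hc : ∀ x y : V, ⟪c x, c y⟫ = ⟪y, x⟫)
    (hc' : ∀ x' y' : V', ⟪c' x', c' y'⟫ = ⟪y', x'⟫)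
    (hcomm : ∀ x : V, ψ (c x) = c' (φ x))
    (α : Module.Basis (Fin m) ℂ V) (β : Module.Basis (Fin m) ℂ W) :
    (Matrix.of fun i j : Fin m => ⟪φ (α i), φ (α j)⟫).det
        * (Matrix.of fun i j : Fin m => ⟪β i, β j⟫).det
      = (Matrix.of fun i j : Fin m => ⟪ψ (β i), ψ (β j)⟫).det
        * (Matrix.of fun i j : Fin m => ⟪α i, α j⟫).det := by
  set M : Matrix (Fin m) (Fin m) ℂ :=
    Matrix.of fun i k => star (α.repr (c.symm (β i)) k) with hM
  have hβ : ∀ i, β i = ∑ k, M i k • c (α k) := by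
    intro i
    have h1 : c.symm (β i) = ∑ k, α.repr (c.symm (β i)) k • α k :=
      (α.sum_repr (c.symm (β i))).symm
    calc β i = c (c.symm (β i)) := (c.apply_symm_apply _).symm
      _ = c (∑ k, α.repr (c.symm (β i)) k • α k) := by rw [← h1]
      _ = ∑ k, M i k • c (α k) := by
          rw [map_sum]
          exact Finset.sum_congr rfl fun k _ => by
            rw [c.map_smulₛₗ]; rfl
  have hψβ : ∀ i, ψ (β i) = ∑ k, M i k • c' (φ (α k)) := by
    intro i
    rw [hβ i, map_sum]
    exact Finset.sum_congr rfl fun k _ => by rw [_root_.map_smul, hcomm]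
  have hGβ : (Matrix.of fun i j : Fin m => ⟪β i, β j⟫)
      = M.map star * (Matrix.of fun i j : Fin m => ⟪c (α i), c (α j)⟫) * Mᵀ := by
    rw [← gram_of_lincomb M (fun k => c (α k))]
    ext i j
    simp only [Matrix.of_apply]
    rw [← hβ i, ← hβ j]
  have hGψβ : (Matrix.of fun i j : Fin m => ⟪ψ (β i), ψ (β j)⟫)
      = M.map star * (Matrix.of fun i j : Fin m => ⟪c' (φ (α i)), c' (φ (α j))⟫) * Mᵀ := by
    rw [← gram_of_lincomb M (fun k => c' (φ (α k)))]
    ext i j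
    simp only [Matrix.of_apply]
    rw [← hψβ i, ← hψβ j]
  have hGc : (Matrix.of fun i j : Fin m => ⟪c (α i), c (α j)⟫)
      = (Matrix.of fun i j : Fin m => ⟪α i, α j⟫)ᵀ := by
    ext i j; simp [hc]
  have hGc' : (Matrix.of fun i j : Fin m => ⟪c' (φ (α i)), c' (φ (α j))⟫)
      = (Matrix.of fun i j : Fin m => ⟪φ (α i), φ (α j)⟫)ᵀ := by
    ext i j; simp [hc']
  rw [hGβ, hGψβ, hGc, hGc']
  simp only [Matrix.det_mul, Matrix.det_transpose]
  ring
end
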